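/- For every integer k ≥ 1, every closed set in the hypercube Q_{4k+1} has cardinality at least 4k + 4. -/

import Mathlib

/-- A nonempty set `U` of vertices of the hypercube `Q_n` (whose graph distance is
Hamming distance) is *closed* if for every `u ∈ U` and every vertex `v` there is
`x ∈ U` with `dist(u,v) = dist(u,x)`. -/
def QClosed (n : ℕ) (U : Finset (Fin n → Bool)) : Prop :=
  U.Nonempty ∧ ∀ u ∈ U, ∀ v : Fin n → Bool, ∃ x ∈ U, hammingDist u v = hammingDist u x

open Finset

/-- Weight parity of a hypercube vertex. -/
noncomputable def wt2 {n : ℕ} (x : Fin n → Bool) : ZMod 2 :=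
  ((Finset.univ.filter (fun i => x i = true)).card : ZMod 2)

lemma hamming_parity {n : ℕ} (u v : Fin n → Bool) :
    ((hammingDist u v : ZMod 2)) = wt2 u + wt2 v := by
  classical
  unfold wt2 hammingDist
  rw [Finset.card_filter, Finset.card_filter, Finset.card_filter]
  push_cast
  rw [← Finset.sum_add_distrib]
  refine Finset.sum_congr rfl fun i _ => ?_
  cases hu : u i <;> cases hv : v i <;> simp [hu, hv] <;> decide

lemma exists_dist {n : ℕ} {U : Finset (Fin n → Bool)} (hU : QClosed n U)
    {u : Fin n → Bool} (hu : u ∈ U) {d : ℕ} (hd : d ≤ n) :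
    ∃ x ∈ U, hammingDist u x = d := by
  classical
  obtain ⟨x, hx, he⟩ := hU.2 u hu (fun i => if (i : ℕ) < d then !(u i) else u i)
  refine ⟨x, hx, ?_⟩
  rw [← he]
  unfold hammingDist
  have h1 : (Finset.univ.filter
        (fun i => u i ≠ (fun i : Fin n => if (i : ℕ) < d then !(u i) else u i) i))
      = Finset.univ.filter (fun i : Fin n => (i : ℕ) < d) := by
    ext i
    by_cases h : (i : ℕ) < d <;> simp [h]
  rw [h1]
  have h2 : Finset.univ.filter (fun i : Fin n => (i : ℕ) < d)
      = (univ : Finset (Fin d)).map (Fin.castLEEmb hd) := by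
    ext i
    simp only [Finset.mem_filter, Finset.mem_univ, true_and, Finset.mem_map,
      Fin.castLEEmb, Function.Embedding.coeFn_mk]
    constructor
    · intro h
      exact ⟨⟨(i : ℕ), by simpa using h⟩, by simp [Fin.castLE, Fin.ext_iff]⟩
    · rintro ⟨j, rfl⟩
      simpa using j.isLt
  rw [h2]
  simp

lemma wt2_of_dist {n : ℕ} {u x : Fin n → Bool} {d : ℕ} (h : hammingDist u x = d) :
    wt2 x = wt2 u + (d : ZMod 2) := by
  have := hamming_parity u x
  rw [h] at this
  have h2 : wt2 u + wt2 u = 0 := by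
    have : (2 : ZMod 2) = 0 := by decide
    calc wt2 u + wt2 u = 2 * wt2 u := by ring
    _ = 0 := by rw [this]; ring
  calc wt2 x = (wt2 u + wt2 u) + wt2 x := by rw [h2]; ring
  _ = wt2 u + (wt2 u + wt2 x) := by ring
  _ = wt2 u + (d : ZMod 2) := by rw [← this]

lemma class_ge {k : ℕ} {U : Finset (Fin (4 * k + 1) → Bool)}
    (hU : QClosed (4 * k + 1) U) (p : ZMod 2) :
    2 * k + 1 ≤ (U.filter (fun x => wt2 x = p)).card := by
  classical
  obtain ⟨u, hu⟩ := hU.1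
  set r : ℕ := if wt2 u = p then 0 else 1 with hr
  have hrp : wt2 u + (r : ZMod 2) = p := by
    by_cases h : wt2 u = p
    · simp [hr, h]
    · simp only [hr, if_neg h]
      push_cast
      have hz : ∀ a b : ZMod 2, a ≠ b → a + 1 = b := by decide
      exact hz _ _ h
  have hrle : r ≤ 1 := by by_cases h : wt2 u = p <;> simp [hr, h]
  -- choice function
  have key : ∀ j : ℕ, j < 2 * k + 1 → ∃ x ∈ U, hammingDist u x = 2 * j + r := by
    intro j hj
    exact exists_dist hU hu (by omega)
  set g : ℕ → (Fin (4 * k + 1) → Bool) := fun j =>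
    if hj : j < 2 * k + 1 then (key j hj).choose else u with hg
  have hgU : ∀ j (hj : j < 2 * k + 1), g j ∈ U ∧ hammingDist u (g j) = 2 * j + r := by
    intro j hj
    have := (key j hj).choose_spec
    simp only [hg, dif_pos hj]; exact this
  have := Finset.card_le_card_of_injOn
    (s := Finset.range (2 * k + 1)) (t := U.filter (fun x => wt2 x = p)) g
    (by
      intro j hj
      simp only [Finset.coe_range, Set.mem_Iio, Finset.mem_range, Finset.mem_coe] at hj
      obtain ⟨hgu, hgd⟩ := hgU j hj
      refine Finset.mem_filter.2 ⟨hgu, ?_⟩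
      rw [wt2_of_dist hgd]
      push_cast
      rw [show ((2 : ZMod 2)) = 0 by decide]
      rw [← hrp]
      ring)
    (by
      intro a ha b hb hab
      simp only [Finset.coe_range, Set.mem_Iio] at ha hb
      have h1 := (hgU a ha).2
      have h2 := (hgU b hb).2
      rw [hab] at h1
      omega)
  simpa using this

lemma no_small_class {k : ℕ} (hk : 1 ≤ k) {U : Finset (Fin (4 * k + 1) → Bool)}
    (hU : QClosed (4 * k + 1) U) (p : ZMod 2)
    (hC : (U.filter (fun x => wt2 x = p)).card = 2 * k + 1) : False := by
  classical
  set C := U.filter (fun x => wt2 x = p) with hCdef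
  have unique2 : ∀ u ∈ C, ∃! x, x ∈ C ∧ hammingDist u x = 2 := by
    intro u huC
    have huU : u ∈ U := (Finset.mem_filter.1 huC).1
    have hup : wt2 u = p := (Finset.mem_filter.1 huC).2
    have key : ∀ j : ℕ, j < 2 * k + 1 → ∃ x ∈ U, hammingDist u x = 2 * j := by
      intro j hj
      exact exists_dist hU huU (by omega)
    set g : ℕ → (Fin (4 * k + 1) → Bool) := fun j =>
      if hj : j < 2 * k + 1 then (key j hj).choose else u with hg
    have hgU : ∀ j (hj : j < 2 * k + 1), g j ∈ U ∧ hammingDist u (g j) = 2 * j := by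
      intro j hj
      have := (key j hj).choose_spec
      simp only [hg, dif_pos hj]; exact this
    have hgC : ∀ j (hj : j < 2 * k + 1), g j ∈ C := by
      intro j hj
      obtain ⟨hgu, hgd⟩ := hgU j hj
      refine Finset.mem_filter.2 ⟨hgu, ?_⟩
      rw [wt2_of_dist hgd]
      push_cast
      rw [show ((2 : ZMod 2)) = 0 by decide, ← hup]
      ring
    have hinj : Set.InjOn g (Finset.range (2 * k + 1)) := by
      intro a ha b hb hab
      simp only [Finset.coe_range, Set.mem_Iio] at ha hb
      have h1 := (hgU a ha).2
      have h2 := (hgU b hb).2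
      rw [hab] at h1
      omega
    have himg : (Finset.range (2 * k + 1)).image g = C := by
      apply Finset.eq_of_subset_of_card_le
      · intro x hx
        obtain ⟨j, hj, rfl⟩ := Finset.mem_image.1 hx
        exact hgC j (Finset.mem_range.1 hj)
      · rw [Finset.card_image_of_injOn hinj, Finset.card_range, hC]
    have h1lt : 1 < 2 * k + 1 := by omega
    refine ⟨g 1, ⟨hgC 1 h1lt, by have := (hgU 1 h1lt).2; omega⟩, ?_⟩
    rintro y ⟨hyC, hyd⟩
    rw [← himg] at hyC
    obtain ⟨j, hj, rfl⟩ := Finset.mem_image.1 hyC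
    have hj' := Finset.mem_range.1 hj
    have := (hgU j hj').2
    have : j = 1 := by omega
    subst this
    rfl
  -- the fixed-point-free involution on C
  set G : ∀ a ∈ C, (Fin (4 * k + 1) → Bool) := fun a ha => (unique2 a ha).choose with hG
  have hGspec : ∀ a (ha : a ∈ C), G a ha ∈ C ∧ hammingDist a (G a ha) = 2 := by
    intro a ha
    exact (unique2 a ha).choose_spec.1
  have hGmem : ∀ a (ha : a ∈ C), G a ha ∈ C := fun a ha => (hGspec a ha).1
  have hGne : ∀ a (ha : a ∈ C), G a ha ≠ a := by
    intro a ha h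
    have := (hGspec a ha).2
    rw [h, hammingDist_self] at this
    omega
  have hGinv : ∀ a (ha : a ∈ C), G (G a ha) (hGmem a ha) = a := by
    intro a ha
    have h1 : G (G a ha) (hGmem a ha) ∈ C ∧
        hammingDist (G a ha) (G (G a ha) (hGmem a ha)) = 2 := hGspec (G a ha) (hGmem a ha)
    have h2 : a ∈ C ∧ hammingDist (G a ha) a = 2 := by
      refine ⟨ha, ?_⟩
      rw [hammingDist_comm]
      exact (hGspec a ha).2
    have hu2 := unique2 (G a ha) (hGmem a ha)
    exact hu2.unique h1 h2
  have hsum : (∑ _x ∈ C, (1 : ZMod 2)) = 0 := by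
    refine Finset.sum_involution G (fun a ha => by decide) (fun a ha _ => hGne a ha)
      hGmem hGinv
  rw [Finset.sum_const, hC] at hsum
  have : (((2 * k + 1 : ℕ)) • (1 : ZMod 2)) = 1 := by
    rw [nsmul_eq_mul, mul_one]
    push_cast
    rw [show ((2 : ZMod 2)) = 0 by decide]
    ring
  rw [this] at hsum
  exact one_ne_zero hsum

theorem closed_card_Q4k1 (k : ℕ) (hk : 1 ≤ k) (U : Finset (Fin (4 * k + 1) → Bool))
    (hU : QClosed (4 * k + 1) U) :
    4 * k + 4 ≤ U.card := by
  classical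
  by_contra h
  push_neg at h
  have h0 := class_ge hU 0
  have h1 := class_ge hU 1
  have hsplit := Finset.card_filter_add_card_filter_not
    (s := U) (p := fun x => wt2 x = 0)
  have heq : U.filter (fun x => ¬ wt2 x = 0) = U.filter (fun x => wt2 x = 1) := by
    apply Finset.filter_congr
    intro x _
    have : ∀ a : ZMod 2, ¬ a = 0 ↔ a = 1 := by decide
    exact this (wt2 x)
  rw [heq] at hsplit
  have hcase : (U.filter (fun x => wt2 x = 0)).card = 2 * k + 1 ∨
      (U.filter (fun x => wt2 x = 1)).card = 2 * k + 1 := by omega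
  cases hcase with
  | inl hc => exact no_small_class hk hU 0 hc
  | inr hc => exact no_small_class hk hU 1 hc
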